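/- Assume (G,E,φ) is pseudo-free. If two elements u₁, u₂ of the tight groupoid of S_{G,E} satisfy d(u₁) = d(u₂), r(u₁) = r(u₂), and ℓ(u₁) = ℓ(u₂) (where ℓ is the lag cocycle into Ǧ ⋊_{ρ̌} ℤ), then u₁ = u₂. -/

import Mathlib

noncomputable section

open scoped Classical

/-! ### Corona groups -/

section CoronaSec

variable (G : Type*) [Group G]

def eventuallyTrivial : Subgroup (ℕ → G) where
  carrier := {f | ∃ N, ∀ n, N ≤ n → f n = 1}
  one_mem' := ⟨0, fun n _ => rfl⟩
  mul_mem' := by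
    rintro a b ⟨N, hN⟩ ⟨M, hM⟩
    exact ⟨max N M, fun n hn => by
      simp [Pi.mul_apply, hN n (le_trans (le_max_left _ _) hn),
        hM n (le_trans (le_max_right _ _) hn)]⟩
  inv_mem' := by
    rintro a ⟨N, hN⟩
    exact ⟨N, fun n hn => by simp [Pi.inv_apply, hN n hn]⟩

instance eventuallyTrivial_normal : (eventuallyTrivial G).Normal := by
  constructor
  rintro a ⟨N, hN⟩ g
  exact ⟨N, fun n hn => by simp [Pi.mul_apply, Pi.inv_apply, hN n hn]⟩

def lshift : (ℕ → G) →* (ℕ → G) where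
  toFun f := fun n => f (n + 1)
  map_one' := rfl
  map_mul' a b := rfl

def rshift : (ℕ → G) →* (ℕ → G) where
  toFun f := fun n => if n = 0 then 1 else f (n - 1)
  map_one' := by funext n; by_cases h : n = 0 <;> simp [h]
  map_mul' a b := by funext n; by_cases h : n = 0 <;> simp [h]

lemma lshift_comap : eventuallyTrivial G ≤ (eventuallyTrivial G).comap (lshift G) := by
  rintro f ⟨N, hN⟩
  exact ⟨N, fun n hn => hN (n + 1) (by omega)⟩

lemma rshift_comap : eventuallyTrivial G ≤ (eventuallyTrivial G).comap (rshift G) := by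
  rintro f ⟨N, hN⟩
  refine ⟨N + 1, fun n hn => ?_⟩
  show (if n = 0 then 1 else f (n - 1)) = 1
  rw [if_neg (by omega)]
  exact hN (n - 1) (by omega)

abbrev Corona : Type _ := (ℕ → G) ⧸ eventuallyTrivial G

def coronaRho : Corona G →* Corona G :=
  QuotientGroup.map _ _ (rshift G) (rshift_comap G)

def coronaLam : Corona G →* Corona G :=
  QuotientGroup.map _ _ (lshift G) (lshift_comap G)

def coronaRhoZ : ℤ → Corona G → Corona G
  | Int.ofNat n => (⇑(coronaRho G))^[n]
  | Int.negSucc n => (⇑(coronaLam G))^[n + 1]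

end CoronaSec

/-! ### Graphs, paths and self-similar actions -/

structure SSGraph (V : Type*) (E : Type*) where
  r : E → V
  d : E → V

namespace SSGraph

variable {V E : Type*}

abbrev Pth (V E : Type*) := V × List E

def IsPath (Γ : SSGraph V E) (p : Pth V E) : Prop :=
  (∀ e ∈ p.2.head?, Γ.r e = p.1) ∧ p.2.Chain' fun a b => Γ.d a = Γ.r b

def src (Γ : SSGraph V E) (p : Pth V E) : V :=
  match p.2.getLast? with
  | none => p.1
  | some e => Γ.d e

def comp (p q : Pth V E) : Pth V E := (p.1, p.2 ++ q.2)

def ofVertex (v : V) : Pth V E := (v, [])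

def ofEdge (Γ : SSGraph V E) (e : E) : Pth V E := (Γ.r e, [e])

structure GraphAction (G : Type*) [Group G] (Γ : SSGraph V E) where
  actV : G → V → V
  actE : G → E → E
  actV_one : ∀ v, actV 1 v = v
  actV_mul : ∀ g h v, actV (g * h) v = actV g (actV h v)
  actE_one : ∀ e, actE 1 e = e
  actE_mul : ∀ g h e, actE (g * h) e = actE g (actE h e)
  r_act : ∀ g e, Γ.r (actE g e) = actV g (Γ.r e)
  d_act : ∀ g e, Γ.d (actE g e) = actV g (Γ.d e)

structure EdgeCocycle {G : Type*} [Group G] {Γ : SSGraph V E} (GA : GraphAction G Γ) where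
  φ : G → E → G
  cocycle : ∀ g h e, φ (g * h) e = φ g (GA.actE h e) * φ h e
  vertex_compat : ∀ g e v, GA.actV (φ g e) v = GA.actV g v

/-- The extension of a self-similar `(G,E,φ)`-datum to the set of all finite paths,
with all the properties listed in the extension proposition. -/
structure PathSystem {G : Type*} [Group G] {Γ : SSGraph V E} {GA : GraphAction G Γ}
    (c : EdgeCocycle GA) where
  act : G → Pth V E → Pth V E
  coc : G → Pth V E → G
  act_vertex : ∀ g v, act g (ofVertex v) = ofVertex (GA.actV g v)
  act_edge : ∀ g e, act g (Γ.ofEdge e) = Γ.ofEdge (GA.actE g e)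
  coc_vertex : ∀ g v, coc g (ofVertex v) = g
  coc_edge : ∀ g e, coc g (Γ.ofEdge e) = c.φ g e
  isPath_act : ∀ g p, Γ.IsPath p → Γ.IsPath (act g p)
  length_act : ∀ g p, Γ.IsPath p → (act g p).2.length = p.2.length
  ran_act : ∀ g p, Γ.IsPath p → (act g p).1 = GA.actV g p.1
  src_act : ∀ g p, Γ.IsPath p → Γ.src (act g p) = GA.actV g (Γ.src p)
  coc_vertex_act : ∀ g p v, Γ.IsPath p → GA.actV (coc g p) v = GA.actV g v
  act_one : ∀ p, Γ.IsPath p → act 1 p = p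
  act_mul : ∀ g h p, Γ.IsPath p → act (g * h) p = act g (act h p)
  coc_mul : ∀ g h p, Γ.IsPath p → coc (g * h) p = coc g (act h p) * coc h p
  act_comp : ∀ g p q, Γ.IsPath p → Γ.IsPath q → Γ.src p = q.1 →
    act g (comp p q) = comp (act g p) (act (coc g p) q)
  coc_comp : ∀ g p q, Γ.IsPath p → Γ.IsPath q → Γ.src p = q.1 →
    coc g (comp p q) = coc (coc g p) q

def PseudoFree {G : Type*} [Group G] {Γ : SSGraph V E} (GA : GraphAction G Γ)
    (c : EdgeCocycle GA) : Prop :=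
  ∀ g e, GA.actE g e = e → c.φ g e = 1 → g = 1

/-! ### The inverse semigroup `S_{G,E}` -/

def SgeCond {G : Type*} [Group G] (Γ : SSGraph V E) (GA : GraphAction G Γ)
    (t : Pth V E × G × Pth V E) : Prop :=
  Γ.IsPath t.1 ∧ Γ.IsPath t.2.2 ∧ Γ.src t.1 = GA.actV t.2.1 (Γ.src t.2.2)

def sgeSet {G : Type*} [Group G] (Γ : SSGraph V E) (GA : GraphAction G Γ) :
    Set (Option (Pth V E × G × Pth V E)) :=
  {x | x = none ∨ ∃ t, x = some t ∧ SgeCond Γ GA t}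

def sgeMulAux {G : Type*} [Group G] {Γ : SSGraph V E} {GA : GraphAction G Γ}
    {c : EdgeCocycle GA} (S : PathSystem c) :
    Pth V E × G × Pth V E → Pth V E × G × Pth V E → Option (Pth V E × G × Pth V E) :=
  fun x y =>
    if x.2.2.1 = y.1.1 ∧ x.2.2.2 <+: y.1.2 then
      let ε : Pth V E := (Γ.src x.2.2, y.1.2.drop x.2.2.2.length)
      some (comp x.1 (S.act x.2.1 ε), S.coc x.2.1 ε * y.2.1, y.2.2)
    else if y.1.1 = x.2.2.1 ∧ y.1.2 <+: x.2.2.2 then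
      let ε : Pth V E := (Γ.src y.1, x.2.2.2.drop y.1.2.length)
      some (x.1, x.2.1 * (S.coc y.2.1⁻¹ ε)⁻¹, comp y.2.2 (S.act y.2.1⁻¹ ε))
    else none

def sgeMul {G : Type*} [Group G] {Γ : SSGraph V E} {GA : GraphAction G Γ}
    {c : EdgeCocycle GA} (S : PathSystem c) :
    Option (Pth V E × G × Pth V E) → Option (Pth V E × G × Pth V E) →
      Option (Pth V E × G × Pth V E)
  | some x, some y => sgeMulAux S x y
  | _, _ => none

def sgeStar {G : Type*} [Group G] :
    Option (Pth V E × G × Pth V E) → Option (Pth V E × G × Pth V E)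
  | none => none
  | some t => some (t.2.2, t.2.1⁻¹, t.1)

/-! ### Infinite paths -/

def InfPath (Γ : SSGraph V E) (ξ : ℕ → E) : Prop :=
  ∀ n, Γ.d (ξ n) = Γ.r (ξ (n + 1))

/-- Truncation of an infinite path: the finite path formed by its first `n` edges.
(Index `n` of the sequence is the `(n+1)`-st edge of the path.) -/
def trunc (Γ : SSGraph V E) (ξ : ℕ → E) (n : ℕ) : Pth V E :=
  (Γ.r (ξ 0), (List.range n).map ξ)

/-- Concatenation `αξ` of a finite path with an infinite path. -/
def compInf (α : Pth V E) (ξ : ℕ → E) : ℕ → E :=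
  fun n => α.2.getD n (ξ (n - α.2.length))

/-- `Phi S g ξ n = φ(g, ξ|_n)`, i.e. the entry of the sequence `Φ(g,ξ) ∈ G^∞` at the
`(n+1)`-st position in the 1-based indexing of the paper. -/
def Phi {G : Type*} [Group G] {Γ : SSGraph V E} {GA : GraphAction G Γ}
    {c : EdgeCocycle GA} (S : PathSystem c) (g : G) (ξ : ℕ → E) : ℕ → G :=
  fun n => S.coc g (Γ.trunc ξ n)

/-- The extension of the self-similar action to infinite paths. -/
structure InfAction {G : Type*} [Group G] {Γ : SSGraph V E} {GA : GraphAction G Γ}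
    {c : EdgeCocycle GA} (S : PathSystem c) where
  a : G → (ℕ → E) → (ℕ → E)
  isInf : ∀ g ξ, Γ.InfPath ξ → Γ.InfPath (a g ξ)
  a_one : ∀ ξ, Γ.InfPath ξ → a 1 ξ = ξ
  a_mul : ∀ g h ξ, Γ.InfPath ξ → a (g * h) ξ = a g (a h ξ)
  trunc_a : ∀ g ξ n, Γ.InfPath ξ → Γ.trunc (a g ξ) n = S.act g (Γ.trunc ξ n)

/-- `η` belongs to the cylinder `Z(β)`. -/
def InCyl (Γ : SSGraph V E) (β : Pth V E) (η : ℕ → E) : Prop :=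
  Γ.r (η 0) = β.1 ∧ ∀ n (hn : n < β.2.length), η n = β.2[n]'hn

/-- Equality of germs `[α₁,g₁,β₁; η₁] = [α₂,g₂,β₂; η₂]` for the action of `S_{G,E}`
on the infinite path space. -/
def germEqv {G : Type*} [Group G] {Γ : SSGraph V E} {GA : GraphAction G Γ}
    {c : EdgeCocycle GA} (S : PathSystem c)
    (α₁ : Pth V E) (g₁ : G) (β₁ : Pth V E) (η₁ : ℕ → E)
    (α₂ : Pth V E) (g₂ : G) (β₂ : Pth V E) (η₂ : ℕ → E) : Prop :=
  η₁ = η₂ ∧ ∃ δ : Pth V E, Γ.IsPath δ ∧ Γ.InCyl δ η₁ ∧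
    sgeMul S (some (α₁, g₁, β₁)) (some (δ, 1, δ)) =
      sgeMul S (some (α₂, g₂, β₂)) (some (δ, 1, δ))

/-- The partial isometry `s_α` associated to a finite path. -/
def sPath {A : Type*} [Monoid A] (pv : V → A) (se : E → A) : Pth V E → A :=
  fun x =>
    match x with
    | (v, []) => pv v
    | (_, es) => (es.map se).prod

end SSGraph

end

/-! ### Auxiliary lemmas for the proof -/

section GermAux

open scoped Classical
open SSGraph

variable {V E G : Type*} [Group G] {Γ : SSGraph V E}

lemma compInf_lt' (β : Pth V E) (ξ : ℕ → E) {n : ℕ} (h : n < β.2.length) :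
    compInf β ξ n = β.2[n] := List.getD_eq_getElem _ _ h

lemma compInf_ge' (β : Pth V E) (ξ : ℕ → E) {n : ℕ} (h : β.2.length ≤ n) :
    compInf β ξ n = ξ (n - β.2.length) := List.getD_eq_default _ _ h

lemma src_eq_getLast' (Γ : SSGraph V E) (p : Pth V E) (hne : p.2 ≠ []) :
    Γ.src p = Γ.d (p.2.getLast hne) := by
  unfold SSGraph.src
  rw [List.getLast?_eq_getLast hne]

lemma src_eq_nil' (Γ : SSGraph V E) (p : Pth V E) (h : p.2 = []) : Γ.src p = p.1 := by
  unfold SSGraph.src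
  rw [h]
  rfl

lemma infPath_compInf' {β : Pth V E} {ξ : ℕ → E} (hβ : Γ.IsPath β) (hξ : Γ.InfPath ξ)
    (hsrc : Γ.src β = Γ.r (ξ 0)) : Γ.InfPath (compInf β ξ) := by
  intro n
  rcases lt_or_ge (n + 1) β.2.length with h | h
  · rw [compInf_lt' β ξ (by omega), compInf_lt' β ξ h]
    have hch := hβ.2
    rw [List.Chain', List.isChain_iff_getElem] at hch
    exact hch n (by omega)
  · rw [compInf_ge' β ξ h]
    rcases lt_or_ge n β.2.length with h2 | h2
    · have hne : β.2 ≠ [] := by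
        intro hc; rw [hc] at h2; simp at h2
      rw [compInf_lt' β ξ h2]
      have h0 : n + 1 - β.2.length = 0 := by omega
      rw [h0, ← hsrc, src_eq_getLast' Γ β hne]
      congr 1
      rw [List.getLast_eq_getElem]
      congr 1
      omega
    · rw [compInf_ge' β ξ h2]
      have h3 : n + 1 - β.2.length = (n - β.2.length) + 1 := by omega
      rw [h3]
      exact hξ _

lemma isPath_trunc' {ξ : ℕ → E} (hξ : Γ.InfPath ξ) (n : ℕ) :
    Γ.IsPath (Γ.trunc ξ n) := by
  constructor
  · intro e he
    rcases Nat.eq_zero_or_pos n with rfl | hn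
    · simp [SSGraph.trunc] at he
    · have hne : ((List.range n).map ξ) ≠ [] := by
        simp
        omega
      rw [Option.mem_def] at he
      have : ((Γ.trunc ξ n).2).head? = some (ξ 0) := by
        show ((List.range n).map ξ).head? = some (ξ 0)
        rw [List.head?_eq_head hne, List.head_eq_getElem]
        congr 1
        simp
      rw [this] at he
      cases he
      rfl
  · show List.Chain' _ ((List.range n).map ξ)
    rw [List.Chain', List.isChain_iff_getElem]
    intro i h
    simp only [List.get_eq_getElem, List.getElem_map, List.getElem_range]
    exact hξ i

lemma rshift_iter' (f : ℕ → G) (L m : ℕ) :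
    ((⇑(rshift G))^[L] f) m = if m < L then 1 else f (m - L) := by
  induction L generalizing m with
  | zero => simp
  | succ L ih =>
    rw [Function.iterate_succ_apply']
    show (if m = 0 then 1 else ((⇑(rshift G))^[L] f) (m - 1)) = _
    rcases Nat.eq_zero_or_pos m with rfl | hm
    · rw [if_pos rfl, if_pos (by omega)]
    · rw [if_neg (by omega), ih]
      rcases lt_or_ge (m - 1) L with h | h
      · rw [if_pos h, if_pos (by omega)]
      · rw [if_neg (by omega), if_neg (by omega)]
        congr 1
        omega

lemma trunc_list_eq' (α : Pth V E) (ζ' : ℕ → E) (k : ℕ) :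
    (List.range (α.2.length + k)).map (compInf α ζ') = α.2 ++ (List.range k).map ζ' := by
  apply List.ext_getElem
  · simp
  · intro n h1 h2
    simp only [List.getElem_map, List.getElem_range, List.getElem_append]
    split
    · next h' => exact compInf_lt' α ζ' h'
    · next h' =>
      exact compInf_ge' α ζ' (by omega)

lemma beta_prefix' (β : Pth V E) (ξ : ℕ → E) {N : ℕ} (h : β.2.length ≤ N) :
    β.2 <+: (List.range N).map (compInf β ξ) := by
  rw [List.prefix_iff_eq_take, ← List.map_take, List.take_range, min_eq_left h]
  apply List.ext_getElem
  · simp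
  · intro n h1 h2
    simp only [List.getElem_map, List.getElem_range]
    exact (compInf_lt' β ξ h1).symm

lemma r_a_zero' {GA : GraphAction G Γ} {c : EdgeCocycle GA} {S : PathSystem c}
    (IA : InfAction S) (g : G) {ξ : ℕ → E} (hξ : Γ.InfPath ξ) :
    Γ.r (IA.a g ξ 0) = GA.actV g (Γ.r (ξ 0)) := by
  have h := congrArg Prod.fst (IA.trunc_a g ξ 1 hξ)
  rw [S.ran_act g _ (isPath_trunc' hξ 1)] at h
  exact h

lemma side_lemma {GA : GraphAction G Γ} {c : EdgeCocycle GA} {S : PathSystem c}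
    (IA : InfAction S) {α : Pth V E} {g : G} {β : Pth V E} {ξ : ℕ → E}
    (hc : SgeCond Γ GA (α, g, β)) (hξ : Γ.InfPath ξ) (hsrc : Γ.src β = Γ.r (ξ 0))
    {N : ℕ} (hN : β.2.length ≤ N) :
    sgeMul S (some (α, g, β)) (some (Γ.trunc (compInf β ξ) N, 1, Γ.trunc (compInf β ξ) N)) =
      some ((α.1, (List.range (α.2.length + (N - β.2.length))).map (compInf α (IA.a g ξ))),
        Phi S g ξ (N - β.2.length) * 1, Γ.trunc (compInf β ξ) N) := by
  have hβ1 : β.1 = (Γ.trunc (compInf β ξ) N).1 := by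
    show β.1 = Γ.r (compInf β ξ 0)
    rcases eq_or_ne β.2 [] with he | he
    · rw [compInf_ge' β ξ (by simp [he]), Nat.zero_sub, ← hsrc, src_eq_nil' Γ β he]
    · rw [compInf_lt' β ξ (List.length_pos_iff.mpr he)]
      have h0 := hc.2.1.1 (β.2.head he) (by rw [List.head?_eq_head he]; rfl)
      rw [← h0]
      congr 1
      rw [List.head_eq_getElem]
  have hpre : β.2 <+: (Γ.trunc (compInf β ξ) N).2 := beta_prefix' β ξ hN
  show sgeMulAux S (α, g, β) (Γ.trunc (compInf β ξ) N, 1, Γ.trunc (compInf β ξ) N) = _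
  unfold sgeMulAux
  rw [if_pos ⟨hβ1, hpre⟩]
  show some (comp α (S.act g (Γ.src β, (Γ.trunc (compInf β ξ) N).2.drop β.2.length)),
      S.coc g (Γ.src β, (Γ.trunc (compInf β ξ) N).2.drop β.2.length) * 1,
      Γ.trunc (compInf β ξ) N) = _
  have hε : ((Γ.src β, (Γ.trunc (compInf β ξ) N).2.drop β.2.length) : Pth V E) =
      Γ.trunc ξ (N - β.2.length) := by
    refine Prod.ext hsrc ?_
    show ((List.range N).map (compInf β ξ)).drop β.2.length = (List.range (N - β.2.length)).map ξ
    apply List.ext_getElem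
    · simp
    · intro n h1 h2
      rw [List.getElem_drop]
      simp only [List.getElem_map, List.getElem_range]
      rw [compInf_ge' β ξ (by omega)]
      congr 1
      omega
  rw [hε, ← IA.trunc_a g ξ (N - β.2.length) hξ]
  refine congrArg some (Prod.ext ?_ rfl)
  refine Prod.ext rfl ?_
  show α.2 ++ (List.range (N - β.2.length)).map (IA.a g ξ) = _
  exact (trunc_list_eq' α (IA.a g ξ) _).symm

end GermAux

open SSGraph in
theorem lag_source_range_determine_germ {V E G : Type*} [Group G] [Countable G] [Fintype V] [Fintype E]
    (Γ : SSGraph V E) (hns : ∀ v : V, ∃ e, Γ.r e = v)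
    (GA : SSGraph.GraphAction G Γ) (c : SSGraph.EdgeCocycle GA)
    (S : PathSystem c) (hpf : PseudoFree GA c) (IA : InfAction S) :
    ∀ (α₁ : Pth V E) (g₁ : G) (β₁ : Pth V E) (ξ₁ : ℕ → E)
      (α₂ : Pth V E) (g₂ : G) (β₂ : Pth V E) (ξ₂ : ℕ → E),
      SgeCond Γ GA (α₁, g₁, β₁) → SgeCond Γ GA (α₂, g₂, β₂) →
      Γ.InfPath ξ₁ → Γ.InfPath ξ₂ →
      Γ.src β₁ = Γ.r (ξ₁ 0) → Γ.src β₂ = Γ.r (ξ₂ 0) →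
      compInf β₁ ξ₁ = compInf β₂ ξ₂ →
      compInf α₁ (IA.a g₁ ξ₁) = compInf α₂ (IA.a g₂ ξ₂) →
      QuotientGroup.mk' (eventuallyTrivial G)
          ((⇑(rshift G))^[α₁.2.length] (Phi S g₁ ξ₁)) =
        QuotientGroup.mk' (eventuallyTrivial G)
          ((⇑(rshift G))^[α₂.2.length] (Phi S g₂ ξ₂)) →
      (α₁.2.length : ℤ) - β₁.2.length = (α₂.2.length : ℤ) - β₂.2.length →
      germEqv S α₁ g₁ β₁ (compInf β₁ ξ₁) α₂ g₂ β₂ (compInf β₂ ξ₂) := by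
  intro α₁ g₁ β₁ ξ₁ α₂ g₂ β₂ ξ₂ hc₁ hc₂ hξ₁ hξ₂ hs₁ hs₂ hsrc hran hcor hlag
  -- extract eventual equality from the corona hypothesis
  rw [QuotientGroup.mk'_eq_mk'] at hcor
  obtain ⟨z, hz, hzeq⟩ := hcor
  obtain ⟨N₀, hN₀⟩ := hz
  set N : ℕ := β₁.2.length + β₂.2.length + N₀ with hNdef
  have hb₁ : β₁.2.length ≤ N := by omega
  have hb₂ : β₂.2.length ≤ N := by omega
  have hlagN : N - β₁.2.length + α₁.2.length = N - β₂.2.length + α₂.2.length := by omega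
  refine ⟨hsrc, Γ.trunc (compInf β₁ ξ₁) N, ?_, ?_, ?_⟩
  · exact isPath_trunc' (infPath_compInf' hc₁.2.1 hξ₁ hs₁) N
  · refine ⟨rfl, fun n hn => ?_⟩
    show compInf β₁ ξ₁ n = ((List.range N).map (compInf β₁ ξ₁))[n]'(by simpa [SSGraph.trunc] using hn)
    simp only [List.getElem_map, List.getElem_range]
  · -- the key computation
    have hα : α₁.1 = α₂.1 := by
      have key : ∀ (α : Pth V E) (g : G) (β : Pth V E) (ξ : ℕ → E),
          SgeCond Γ GA (α, g, β) → Γ.InfPath ξ → Γ.src β = Γ.r (ξ 0) →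
          α.1 = Γ.r (compInf α (IA.a g ξ) 0) := by
        intro α g β ξ hc hξ hs
        rcases eq_or_ne α.2 [] with he | he
        · rw [compInf_ge' α _ (by simp [he]), Nat.zero_sub, r_a_zero' IA g hξ, ← hs,
            ← hc.2.2, src_eq_nil' Γ α he]
        · rw [compInf_lt' α _ (List.length_pos_iff.mpr he)]
          have h0 := hc.1.1 (α.2.head he) (by rw [List.head?_eq_head he]; rfl)
          rw [← h0]
          congr 1
          rw [List.head_eq_getElem]
      have k1 := key α₁ g₁ β₁ ξ₁ hc₁ hξ₁ hs₁
      have k2 := key α₂ g₂ β₂ ξ₂ hc₂ hξ₂ hs₂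
      rw [hran] at k1
      exact k1.trans k2.symm
    have hQ : Phi S g₁ ξ₁ (N - β₁.2.length) = Phi S g₂ ξ₂ (N - β₂.2.length) := by
      have hm := congrFun hzeq (N - β₁.2.length + α₁.2.length)
      rw [Pi.mul_apply, hN₀ _ (by omega), mul_one, rshift_iter', rshift_iter',
        if_neg (by omega), if_neg (by omega)] at hm
      have e1 : N - β₁.2.length + α₁.2.length - α₁.2.length = N - β₁.2.length := by omega
      have e2 : N - β₁.2.length + α₁.2.length - α₂.2.length = N - β₂.2.length := by omega
      rw [e1, e2] at hm
      exact hm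
    have hM : α₁.2.length + (N - β₁.2.length) = α₂.2.length + (N - β₂.2.length) := by omega
    have h2 := side_lemma IA hc₂ hξ₂ hs₂ hb₂
    rw [← hsrc] at h2
    rw [side_lemma IA hc₁ hξ₁ hs₁ hb₁, h2]
    refine congrArg some (Prod.ext (Prod.ext hα ?_) (Prod.ext ?_ rfl))
    · rw [hran, hM]
    · rw [hQ]
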